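/- Let C be the presented group on three generators a, b, t with the two relators t⁻¹·a·t·a⁻¹·b⁻¹ and t⁻¹·b·t·a⁻¹·b⁻¹·b⁻¹ (encoding t⁻¹at = ba and t⁻¹bt = bba), and let D be the presented group on two generators a, t with the single relator t·a⁻¹·a⁻¹·t·a·t⁻¹·a⁻¹·t⁻¹·a. Then C and D are isomorphic as groups. -/

import Mathlib

/-- Relators for the mapping-torus presentation on generators
`a = of 0`, `b = of 1`, `t = of 2`: the relators
`t⁻¹·a·t·a⁻¹·b⁻¹` and `t⁻¹·b·t·a⁻¹·b⁻¹·b⁻¹`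
(encoding `t⁻¹at = ba` and `t⁻¹bt = bba`). -/
def relsC : Set (FreeGroup (Fin 3)) :=
  let a := FreeGroup.of 0
  let b := FreeGroup.of 1
  let t := FreeGroup.of 2
  {t⁻¹ * a * t * a⁻¹ * b⁻¹, t⁻¹ * b * t * a⁻¹ * b⁻¹ * b⁻¹}

/-- Relator for the two-generator presentation on `a = of 0`, `t = of 1`:
`t·a⁻¹·a⁻¹·t·a·t⁻¹·a⁻¹·t⁻¹·a`. -/
def relD : FreeGroup (Fin 2) :=
  let a := FreeGroup.of 0
  let t := FreeGroup.of 1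
  t * a⁻¹ * a⁻¹ * t * a * t⁻¹ * a⁻¹ * t⁻¹ * a

namespace Stmt3Aux

abbrev C := PresentedGroup relsC
abbrev D := PresentedGroup ({relD} : Set (FreeGroup (Fin 2)))

lemma rel_one {α : Type*} {rels : Set (FreeGroup α)} {r : FreeGroup α} (h : r ∈ rels) :
    PresentedGroup.mk rels r = 1 :=
  (QuotientGroup.eq_one_iff r).2 (Subgroup.subset_normalClosure h)

/-- Abstract: second C-relator holds for `b := t⁻¹at a⁻¹` once relD holds. -/
lemma abstract2 {G : Type*} [Group G] (a t : G)
    (hD : t * a⁻¹ * a⁻¹ * t * a * t⁻¹ * a⁻¹ * t⁻¹ * a = 1) :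
    t⁻¹ * (t⁻¹ * a * t * a⁻¹) * t * a⁻¹ * (t⁻¹ * a * t * a⁻¹)⁻¹ *
      (t⁻¹ * a * t * a⁻¹)⁻¹ = 1 := by
  have key : t⁻¹ * (t⁻¹ * a * t * a⁻¹) * t * a⁻¹ * (t⁻¹ * a * t * a⁻¹)⁻¹ *
      (t⁻¹ * a * t * a⁻¹)⁻¹ =
      (t⁻¹ * t⁻¹ * a) * (t * a⁻¹ * a⁻¹ * t * a * t⁻¹ * a⁻¹ * t⁻¹ * a) *
      (t⁻¹ * t⁻¹ * a)⁻¹ := by group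
  rw [key, hD]
  group

/-- Abstract: relD holds in any group satisfying the two C-relators. -/
lemma abstract1 {G : Type*} [Group G] (a b t : G)
    (h1 : t⁻¹ * a * t * a⁻¹ * b⁻¹ = 1)
    (h2 : t⁻¹ * b * t * a⁻¹ * b⁻¹ * b⁻¹ = 1) :
    t * a⁻¹ * a⁻¹ * t * a * t⁻¹ * a⁻¹ * t⁻¹ * a = 1 := by
  have hb : t⁻¹ * a * t * a⁻¹ = b := mul_inv_eq_one.mp h1
  rw [← hb] at h2
  have key : t * a⁻¹ * a⁻¹ * t * a * t⁻¹ * a⁻¹ * t⁻¹ * a =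
      (a⁻¹ * t * t) *
      (t⁻¹ * (t⁻¹ * a * t * a⁻¹) * t * a⁻¹ * (t⁻¹ * a * t * a⁻¹)⁻¹ *
        (t⁻¹ * a * t * a⁻¹)⁻¹) * (a⁻¹ * t * t)⁻¹ := by group
  rw [key, h2]
  group

-- the relation in D
lemma hD : (PresentedGroup.of 1 : D) * (PresentedGroup.of 0)⁻¹ * (PresentedGroup.of 0)⁻¹ *
    PresentedGroup.of 1 * PresentedGroup.of 0 * (PresentedGroup.of 1)⁻¹ *
    (PresentedGroup.of 0)⁻¹ * (PresentedGroup.of 1)⁻¹ * PresentedGroup.of 0 = 1 := by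
  have h := rel_one (rels := ({relD} : Set (FreeGroup (Fin 2)))) (Set.mem_singleton relD)
  simp only [relD, map_mul, map_inv] at h
  exact h

-- relations in C
lemma hC1 : (PresentedGroup.of 2 : C)⁻¹ * PresentedGroup.of 0 * PresentedGroup.of 2 *
    (PresentedGroup.of 0)⁻¹ * (PresentedGroup.of 1)⁻¹ = 1 := by
  have h := rel_one (rels := relsC) (show _ ∈ relsC from Set.mem_insert _ _)
  simp only [relsC, map_mul, map_inv] at h
  exact h

lemma hC2 : (PresentedGroup.of 2 : C)⁻¹ * PresentedGroup.of 1 * PresentedGroup.of 2 *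
    (PresentedGroup.of 0)⁻¹ * (PresentedGroup.of 1)⁻¹ * (PresentedGroup.of 1)⁻¹ = 1 := by
  have h := rel_one (rels := relsC)
    (show _ ∈ relsC from Set.mem_insert_iff.2 (Or.inr rfl))
  simp only [relsC, map_mul, map_inv] at h
  exact h

/-- map on generators C → D : a ↦ a, b ↦ t⁻¹at a⁻¹, t ↦ t -/
def fCD : Fin 3 → D
  | 0 => PresentedGroup.of 0
  | 1 => (PresentedGroup.of 1)⁻¹ * PresentedGroup.of 0 * PresentedGroup.of 1 *
      (PresentedGroup.of 0)⁻¹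
  | 2 => PresentedGroup.of 1

/-- map on generators D → C : a ↦ a, t ↦ t -/
def fDC : Fin 2 → C
  | 0 => PresentedGroup.of 0
  | 1 => PresentedGroup.of 2

lemma hfCD : ∀ r ∈ relsC, FreeGroup.lift fCD r = 1 := by
  intro r hr
  rcases hr with hr | hr
  · subst hr
    simp only [map_mul, map_inv, FreeGroup.lift_apply_of, fCD]
    group
  · rw [Set.mem_singleton_iff] at hr
    subst hr
    simp only [map_mul, map_inv, FreeGroup.lift_apply_of, fCD]
    exact abstract2 _ _ hD

lemma hfDC : ∀ r ∈ ({relD} : Set (FreeGroup (Fin 2))), FreeGroup.lift fDC r = 1 := by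
  intro r hr
  rw [Set.mem_singleton_iff] at hr
  subst hr
  simp only [relD, map_mul, map_inv, FreeGroup.lift_apply_of, fDC]
  exact abstract1 _ _ _ hC1 hC2

noncomputable def phi : C →* D := PresentedGroup.toGroup hfCD
noncomputable def psi : D →* C := PresentedGroup.toGroup hfDC

end Stmt3Aux

open Stmt3Aux in
theorem stmt_3 :
    Nonempty (PresentedGroup relsC ≃*
      PresentedGroup ({relD} : Set (FreeGroup (Fin 2)))) := by
  refine ⟨MonoidHom.toMulEquiv phi psi ?_ ?_⟩
  · ext x
    fin_cases x <;>
      simp only [MonoidHom.comp_apply, MonoidHom.id_apply, phi, psi,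
        PresentedGroup.toGroup.of, fCD, fDC, map_mul, map_inv]
    · rfl
    · exact mul_inv_eq_one.mp hC1
    · rfl
  · ext x
    fin_cases x <;>
      simp only [MonoidHom.comp_apply, MonoidHom.id_apply, phi, psi,
        PresentedGroup.toGroup.of, fCD, fDC, map_mul, map_inv] <;>
      rfl
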